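/- Let G be a finite group and H, H' subgroups of G. Then H and H' are Gassmann equivalent in G if and only if for every g ∈ G and every natural number n, the number of orbits of cardinality n of the left-multiplication action of the cyclic subgroup ⟨g⟩ on the left coset space G/H equals the number of orbits of cardinality n of the action of ⟨g⟩ on G/H' (i.e., H and H' have the same coset type with respect to every cyclic subgroup of G). -/

import Mathlib

/-- Two subgroups `H` and `H'` of a group `G` are Gassmann equivalent if every
`g : G` is conjugate to the same number of elements of `H` as of `H'`. -/
def IsGassmannEquiv {G : Type*} [Group G] (H H' : Subgroup G) : Prop :=
  ∀ g : G, Nat.card {h : H // IsConj g (h : G)} = Nat.card {h : H' // IsConj g (h : G)}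

/-- The number of orbits of cardinality `n` of the left-multiplication action of the
cyclic subgroup generated by `g` on the coset space `G ⧸ H`. -/
noncomputable def cosetTypeCount {G : Type*} [Group G] (H : Subgroup G) (g : G) (n : ℕ) : ℕ :=
  Nat.card {s : Set (G ⧸ H) //
    (∃ x : G ⧸ H, s = MulAction.orbit (Subgroup.zpowers g) x) ∧ Nat.card s = n}


section GassmannAux

set_option linter.unusedSectionVars false

open MulAction Function

variable {G : Type*} [Group G] [Finite G]

lemma GA.card_orbit (g : G) {α : Type*} [MulAction G α] [Finite α] (x : α) :
    Nat.card (MulAction.orbit (Subgroup.zpowers g) x) = Function.minimalPeriod (g • ·) x := by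
  classical
  have : Fintype (MulAction.orbit (Subgroup.zpowers g) x) := Fintype.ofFinite _
  rw [Nat.card_eq_fintype_card, ← MulAction.minimalPeriod_eq_card]

/-- The points lying in orbits of size `d`, as a sigma type over those orbits. -/
noncomputable def GA.orbitSigmaEquiv (C : Type*) [Group C] {Ω : Type*} [MulAction C Ω] (d : ℕ) :
    {x : Ω // Nat.card (MulAction.orbit C x) = d} ≃
      Σ s : {s : Set Ω // (∃ x : Ω, s = MulAction.orbit C x) ∧ Nat.card s = d},
        {y : Ω // y ∈ (s : Set Ω)} where
  toFun x := ⟨⟨MulAction.orbit C x.1, ⟨x.1, rfl⟩, x.2⟩, ⟨x.1, MulAction.mem_orbit_self x.1⟩⟩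
  invFun p := ⟨p.2.1, by
    obtain ⟨x₀, hx₀⟩ := p.1.2.1
    have hy : p.2.1 ∈ MulAction.orbit C x₀ := hx₀ ▸ p.2.2
    have : MulAction.orbit C p.2.1 = p.1.1 :=
      (MulAction.orbit_eq_iff.mpr hy).trans hx₀.symm
    rw [this]; exact p.1.2.2⟩
  left_inv x := Subtype.ext rfl
  right_inv p := by
    obtain ⟨x₀, hx₀⟩ := p.1.2.1
    have hy : p.2.1 ∈ MulAction.orbit C x₀ := hx₀ ▸ p.2.2
    exact Sigma.subtype_ext
      (Subtype.ext ((MulAction.orbit_eq_iff.mpr hy).trans hx₀.symm)) rfl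

lemma GA.card_orbitSize_eq (g : G) (H : Subgroup G) (d : ℕ) :
    Nat.card {x : G ⧸ H // Nat.card (MulAction.orbit (Subgroup.zpowers g) x) = d}
      = d * cosetTypeCount H g d := by
  classical
  have := Fintype.ofFinite G
  have := Fintype.ofFinite (G ⧸ H)
  rw [Nat.card_congr (GA.orbitSigmaEquiv (Subgroup.zpowers g) d)]
  rw [Nat.card_eq_fintype_card, Fintype.card_sigma]
  have hcard : ∀ s : {s : Set (G ⧸ H) //
      (∃ x : G ⧸ H, s = MulAction.orbit (Subgroup.zpowers g) x) ∧ Nat.card s = d},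
      Fintype.card {y : G ⧸ H // y ∈ (s : Set (G ⧸ H))} = d := by
    intro s
    rw [← Nat.card_eq_fintype_card]
    exact s.2.2
  simp only [hcard, Finset.sum_const, smul_eq_mul, Finset.card_univ]
  rw [cosetTypeCount, Nat.card_eq_fintype_card, mul_comm]

/-- Partition a divisibility count by the exact value. -/
lemma GA.card_dvd_eq_sum {α : Type*} [Finite α] (f : α → ℕ)
    {n : ℕ} (hn : n ≠ 0) :
    Nat.card {x : α // f x ∣ n} = ∑ d ∈ n.divisors, Nat.card {x : α // f x = d} := by
  classical
  have := Fintype.ofFinite α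
  simp only [Nat.card_eq_fintype_card, Fintype.card_subtype]
  rw [Finset.card_eq_sum_card_fiberwise (f := f) (t := n.divisors)
    (fun x hx => Nat.mem_divisors.mpr ⟨(Finset.mem_filter.mp hx).2, hn⟩)]
  refine Finset.sum_congr rfl fun d hd => ?_
  congr 1
  rw [Finset.filter_filter]
  refine Finset.filter_congr fun x _ => ?_
  constructor
  · rintro ⟨-, h⟩; exact h
  · rintro h; exact ⟨h ▸ (Nat.mem_divisors.mp hd).1, h⟩

lemma GA.fix_pow_eq_sum (g : G) (H : Subgroup G) {n : ℕ} (hn : n ≠ 0) :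
    Nat.card {x : G ⧸ H // g ^ n • x = x}
      = ∑ d ∈ n.divisors,
          Nat.card {x : G ⧸ H // Nat.card (MulAction.orbit (Subgroup.zpowers g) x) = d} := by
  have hiff : ∀ x : G ⧸ H,
      (g ^ n • x = x) ↔ Nat.card (MulAction.orbit (Subgroup.zpowers g) x) ∣ n := by
    intro x
    erw [GA.card_orbit g x]; rw [MulAction.pow_smul_eq_iff_minimalPeriod_dvd]
  rw [Nat.card_congr (Equiv.subtypeEquivRight hiff)]
  exact GA.card_dvd_eq_sum _ hn

noncomputable def GA.equivFixProd (g : G) (H : Subgroup G) :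
    {x : G // x⁻¹ * g * x ∈ H} ≃ {q : G ⧸ H // g • q = q} × H where
  toFun x := ⟨⟨QuotientGroup.mk x.1, by
      change QuotientGroup.mk (g * x.1) = QuotientGroup.mk x.1
      rw [QuotientGroup.eq]
      have := H.inv_mem x.2
      simpa [mul_assoc] using this⟩,
    ⟨((QuotientGroup.mk x.1 : G ⧸ H)).out⁻¹ * x.1, by
      rw [← QuotientGroup.eq]
      exact QuotientGroup.out_eq' _⟩⟩
  invFun p := ⟨p.1.1.out * p.2.1, by
    rw [mul_assoc, ← QuotientGroup.eq]
    calc QuotientGroup.mk (p.1.1.out * p.2.1) = p.1.1 := by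
          rw [QuotientGroup.mk_mul_of_mem _ p.2.2, QuotientGroup.out_eq']
      _ = QuotientGroup.mk (g * (p.1.1.out * p.2.1)) := by
          conv_lhs => rw [← p.1.2]
          change _ = g • (QuotientGroup.mk (p.1.1.out * p.2.1))
          rw [QuotientGroup.mk_mul_of_mem _ p.2.2, QuotientGroup.out_eq']⟩
  left_inv x := by
    ext
    simp
  right_inv p := by
    have hmk : QuotientGroup.mk (p.1.1.out * p.2.1) = p.1.1 := by
      rw [QuotientGroup.mk_mul_of_mem _ p.2.2, QuotientGroup.out_eq']
    ext
    · exact hmk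
    · show ((QuotientGroup.mk (p.1.1.out * p.2.1) : G ⧸ H)).out⁻¹ * (p.1.1.out * p.2.1)
        = p.2.1
      rw [hmk, inv_mul_cancel_left]

/-- For `h` conjugate to `g`, a chosen conjugator: `c * g * c⁻¹ = h`. -/
noncomputable def GA.conjWitness {g h : G} (hc : IsConj g h) : G :=
  (isConj_iff.mp hc).choose

lemma GA.conjWitness_spec {g h : G} (hc : IsConj g h) :
    GA.conjWitness hc * g * (GA.conjWitness hc)⁻¹ = h :=
  (isConj_iff.mp hc).choose_spec

lemma GA.isConj_conj (g x : G) : IsConj g (x⁻¹ * g * x) :=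
  isConj_iff.mpr ⟨x⁻¹, by group⟩

noncomputable def GA.equivConjProd (g : G) (H : Subgroup G) :
    {x : G // x⁻¹ * g * x ∈ H} ≃
      {h : H // IsConj g (h : G)} × (Subgroup.centralizer {g}) where
  toFun x :=
    ⟨⟨⟨x.1⁻¹ * g * x.1, x.2⟩, GA.isConj_conj g x.1⟩,
     ⟨x.1 * GA.conjWitness (GA.isConj_conj g x.1), by
        rw [Subgroup.mem_centralizer_singleton_iff]
        set w := GA.conjWitness (GA.isConj_conj g x.1) with hwdef
        have hw : w * g * w⁻¹ = x.1⁻¹ * g * x.1 := GA.conjWitness_spec _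
        calc x.1 * w * g = x.1 * (w * g * w⁻¹) * w := by group
          _ = x.1 * (x.1⁻¹ * g * x.1) * w := by rw [hw]
          _ = g * (x.1 * w) := by group⟩⟩
  invFun p := ⟨p.2.1 * (GA.conjWitness p.1.2)⁻¹, by
    set w := GA.conjWitness p.1.2 with hwdef
    set z := p.2.1 with hzdef
    have hw : w * g * w⁻¹ = (p.1.1 : G) := GA.conjWitness_spec _
    have hz : z * g = g * z := Subgroup.mem_centralizer_singleton_iff.mp p.2.2
    have hzz : z⁻¹ * g * z = g := by rw [mul_assoc, ← hz]; group
    have : (z * w⁻¹)⁻¹ * g * (z * w⁻¹) = (p.1.1 : G) := by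
      calc (z * w⁻¹)⁻¹ * g * (z * w⁻¹) = w * (z⁻¹ * g * z) * w⁻¹ := by group
        _ = w * g * w⁻¹ := by rw [hzz]
        _ = (p.1.1 : G) := hw
    rw [this]; exact p.1.1.2⟩
  left_inv x := by
    set w := GA.conjWitness (GA.isConj_conj g x.1) with hwdef
    apply Subtype.ext
    show x.1 * w * (GA.conjWitness (GA.isConj_conj g x.1))⁻¹ = x.1
    rw [← hwdef, mul_inv_cancel_right]
  right_inv p := by
    set w := GA.conjWitness p.1.2 with hwdef
    set z := p.2.1 with hzdef
    set x : G := z * w⁻¹ with hxdef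
    have hw : w * g * w⁻¹ = (p.1.1 : G) := GA.conjWitness_spec _
    have hz : z * g = g * z := Subgroup.mem_centralizer_singleton_iff.mp p.2.2
    have hzz : z⁻¹ * g * z = g := by rw [mul_assoc, ← hz]; group
    have hx : x⁻¹ * g * x = (p.1.1 : G) := by
      calc x⁻¹ * g * x = w * (z⁻¹ * g * z) * w⁻¹ := by rw [hxdef]; group
        _ = w * g * w⁻¹ := by rw [hzz]
        _ = (p.1.1 : G) := hw
    have h1 : (⟨⟨x⁻¹ * g * x, by rw [hx]; exact p.1.1.2⟩, GA.isConj_conj g x⟩ :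
        {h : H // IsConj g (h : G)}) = p.1 := by
      apply Subtype.ext; apply Subtype.ext; exact hx
    refine Prod.ext h1 ?_
    apply Subtype.ext
    show x * GA.conjWitness (GA.isConj_conj g x) = z
    have : GA.conjWitness (GA.isConj_conj g x) = w := by
      congr 1
    rw [this, hxdef, inv_mul_cancel_right]

lemma GA.cosetTypeCount_zero (g : G) (H : Subgroup G) :
    Nat.card {s : Set (G ⧸ H) //
      (∃ x : G ⧸ H, s = MulAction.orbit (Subgroup.zpowers g) x) ∧ Nat.card s = 0} = 0 := by
  have : IsEmpty {s : Set (G ⧸ H) //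
      (∃ x : G ⧸ H, s = MulAction.orbit (Subgroup.zpowers g) x) ∧ Nat.card s = 0} := by
    constructor
    rintro ⟨s, ⟨x, rfl⟩, hcard⟩
    have h1 : Nat.card (MulAction.orbit (Subgroup.zpowers g) x) ≠ 0 :=
      Nat.card_ne_zero.mpr ⟨(MulAction.nonempty_orbit x).to_subtype, Subtype.finite⟩
    exact h1 hcard
  exact Nat.card_of_isEmpty

lemma GA.card_eq_of_gassmann {H H' : Subgroup G}
    (hG : ∀ g : G, Nat.card {h : H // IsConj g (h : G)}
      = Nat.card {h : H' // IsConj g (h : G)}) :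
    Nat.card H = Nat.card H' := by
  classical
  have := Fintype.ofFinite G
  have : Fintype (ConjClasses G) := Fintype.ofFinite _
  have key : ∀ (K : Subgroup G), Nat.card K
      = ∑ c : ConjClasses G, Nat.card {h : K // ConjClasses.mk (h : G) = c} := by
    intro K
    have := Fintype.ofFinite K
    rw [Nat.card_congr (Equiv.sigmaFiberEquiv (fun h : K => ConjClasses.mk (h : G))).symm]
    rw [Nat.card_eq_fintype_card, Fintype.card_sigma]
    simp [Nat.card_eq_fintype_card]
  rw [key H, key H']
  refine Finset.sum_congr rfl fun c _ => ?_
  obtain ⟨g, rfl⟩ := ConjClasses.mk_surjective c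
  have e : ∀ (K : Subgroup G), {h : K // ConjClasses.mk (h : G) = ConjClasses.mk g}
      ≃ {h : K // IsConj g (h : G)} := fun K =>
    Equiv.subtypeEquivRight fun h => by
      rw [ConjClasses.mk_eq_mk_iff_isConj, isConj_comm]
  rw [Nat.card_congr (e H), Nat.card_congr (e H')]
  exact hG g

lemma GA.card_mul_fix (g : G) (H : Subgroup G) :
    Nat.card H * Nat.card {q : G ⧸ H // g • q = q}
      = Nat.card (Subgroup.centralizer {g} : Subgroup G)
          * Nat.card {h : H // IsConj g (h : G)} := by
  have h1 := Nat.card_congr (GA.equivFixProd g H)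
  have h2 := Nat.card_congr (GA.equivConjProd g H)
  rw [Nat.card_prod] at h1 h2
  rw [mul_comm, ← h1, h2, mul_comm]

lemma GA.fix_eq_count (g : G) (H : Subgroup G) :
    Nat.card {q : G ⧸ H // g • q = q} = cosetTypeCount H g 1 := by
  have e : {q : G ⧸ H // g • q = q} ≃ {q : G ⧸ H // g ^ 1 • q = q} :=
    Equiv.subtypeEquivRight fun q => by rw [pow_one]
  rw [Nat.card_congr e, GA.fix_pow_eq_sum g H one_ne_zero, Nat.divisors_one,
    Finset.sum_singleton, GA.card_orbitSize_eq, one_mul]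

end GassmannAux

/-- Subgroups `H`, `H'` of a finite group `G` are Gassmann equivalent iff they have the
same coset type with respect to every cyclic subgroup `⟨g⟩` of `G`: for each `g ∈ G` and
each `n`, the action of `⟨g⟩` on `G ⧸ H` and on `G ⧸ H'` has the same number of orbits of
cardinality `n`. -/
theorem gassmann_equiv_iff_cosetTypeCount_eq {G : Type*} [Group G] [Finite G]
    (H H' : Subgroup G) :
    IsGassmannEquiv H H' ↔
      ∀ (g : G) (n : ℕ), cosetTypeCount H g n = cosetTypeCount H' g n := by
  constructor
  · intro hG g n
    have hcard : Nat.card H = Nat.card H' := GA.card_eq_of_gassmann hG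
    have hHpos : 0 < Nat.card H := Nat.card_pos
    have hfix : ∀ k : G, Nat.card {q : G ⧸ H // k • q = q}
        = Nat.card {q : G ⧸ H' // k • q = q} := by
      intro k
      have h1 := GA.card_mul_fix k H
      have h2 := GA.card_mul_fix k H'
      rw [← hG k] at h2
      rw [hcard] at h1
      exact Nat.eq_of_mul_eq_mul_left (hcard ▸ hHpos) (h1.trans h2.symm)
    induction n using Nat.strong_induction_on with
    | _ n ih =>
      rcases Nat.eq_zero_or_pos n with h0 | hpos
      · subst h0
        rw [cosetTypeCount, cosetTypeCount, GA.cosetTypeCount_zero, GA.cosetTypeCount_zero]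
      · have hn : n ≠ 0 := hpos.ne'
        have hfixn := hfix (g ^ n)
        rw [GA.fix_pow_eq_sum g H hn, GA.fix_pow_eq_sum g H' hn] at hfixn
        have hnmem : n ∈ n.divisors := Nat.mem_divisors_self n hn
        rw [← Finset.add_sum_erase _ _ hnmem, ← Finset.add_sum_erase _ _ hnmem] at hfixn
        have hrest : ∑ d ∈ n.divisors.erase n,
            Nat.card {x : G ⧸ H // Nat.card (MulAction.orbit (Subgroup.zpowers g) x) = d}
          = ∑ d ∈ n.divisors.erase n,
            Nat.card {x : G ⧸ H' // Nat.card (MulAction.orbit (Subgroup.zpowers g) x) = d} := by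
          refine Finset.sum_congr rfl fun d hd => ?_
          have hdlt : d < n := by
            have hdvd : d ∣ n := (Nat.mem_divisors.mp (Finset.mem_of_mem_erase hd)).1
            exact lt_of_le_of_ne (Nat.le_of_dvd hpos hdvd) (Finset.ne_of_mem_erase hd)
          rw [GA.card_orbitSize_eq, GA.card_orbitSize_eq, ih d hdlt]
        rw [hrest] at hfixn
        have hmain := Nat.add_right_cancel hfixn
        rw [GA.card_orbitSize_eq, GA.card_orbitSize_eq] at hmain
        exact Nat.eq_of_mul_eq_mul_left hpos hmain
  · intro h g
    have hfix : ∀ k : G, Nat.card {q : G ⧸ H // k • q = q}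
        = Nat.card {q : G ⧸ H' // k • q = q} := fun k => by
      rw [GA.fix_eq_count, GA.fix_eq_count, h k 1]
    have hquot : Nat.card (G ⧸ H) = Nat.card (G ⧸ H') := by
      have e : ∀ K : Subgroup G, {q : G ⧸ K // (1 : G) • q = q} ≃ (G ⧸ K) :=
        fun K => Equiv.subtypeUnivEquiv fun q => one_smul G q
      have h1 := hfix 1
      rwa [Nat.card_congr (e H), Nat.card_congr (e H')] at h1
    have hHH' : Nat.card H = Nat.card H' := by
      have l1 := Subgroup.card_eq_card_quotient_mul_card_subgroup H
      have l2 := Subgroup.card_eq_card_quotient_mul_card_subgroup H'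
      rw [hquot] at l1
      have hq : 0 < Nat.card (G ⧸ H') := Nat.card_pos
      exact Nat.eq_of_mul_eq_mul_left hq (l1.symm.trans l2)
    have hZ : 0 < Nat.card (Subgroup.centralizer {g} : Subgroup G) := Nat.card_pos
    have h1 := GA.card_mul_fix g H
    have h2 := GA.card_mul_fix g H'
    rw [hfix g, hHH'] at h1
    exact Nat.eq_of_mul_eq_mul_left hZ (h1.symm.trans h2)
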